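/- (Quantitative core of Theorem 5, the corner-point abstraction approximation.) Let γ ∈ (0, 1), let n be a natural number, let M ≥ 0, B ≥ 0 and ε ≥ 0 be real numbers, and let Δθ_0, …, Δθ_n, Δu_0, …, Δu_n be real numbers with |Δθ_i| ≤ B and |Δu_i| ≤ B for all i. Let d_0, …, d_n and d'_0, …, d'_n be delays in [0, M] with |d_i − d'_i| ≤ 2ε for all i. Define decision times t_i = Σ_{j<i} (d_j + 1) and t'_i = Σ_{j<i} (d'_j + 1), and returns G = Σ_{i=0}^{n} γ^{t_i}·(Δθ_i + ((1 − γ^{d_i})/(−ln γ))·Δu_i) and G' = Σ_{i=0}^{n} γ^{t'_i}·(Δθ_i + ((1 − γ^{d'_i})/(−ln γ))·Δu_i). Then |G − G'| ≤ 2·ε·B·(n + 1)·(1 + (−ln γ)·(1 + M)·n). -/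

import Mathlib

private lemma exp_lip_aux {a b : ℝ} (hb : b ≤ 0) (hab : a ≤ b) :
    Real.exp b - Real.exp a ≤ b - a := by
  have h1 : Real.exp b ≤ 1 := Real.exp_le_one_iff.mpr hb
  have h2 := Real.add_one_le_exp (a - b)
  have h3 : Real.exp a = Real.exp b * Real.exp (a - b) := by
    rw [← Real.exp_add]; ring_nf
  have h4 : Real.exp (a - b) ≤ 1 := Real.exp_le_one_iff.mpr (by linarith)
  nlinarith [Real.exp_pos b]

private lemma exp_lip {a b : ℝ} (ha : a ≤ 0) (hb : b ≤ 0) :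
    |Real.exp a - Real.exp b| ≤ |a - b| := by
  rcases le_total a b with h | h
  · rw [abs_sub_comm, abs_of_nonneg (by linarith [Real.exp_le_exp.mpr h]),
      abs_sub_comm, abs_of_nonneg (by linarith)]
    exact exp_lip_aux hb h
  · rw [abs_of_nonneg (by linarith [Real.exp_le_exp.mpr h]),
      abs_of_nonneg (by linarith)]
    exact exp_lip_aux ha h

private lemma rpow_lip {γ : ℝ} (hγ0 : 0 < γ) (hγ1 : γ < 1) {x y : ℝ}
    (hx : 0 ≤ x) (hy : 0 ≤ y) :
    |γ ^ x - γ ^ y| ≤ (-Real.log γ) * |x - y| := by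
  have hlog : Real.log γ < 0 := Real.log_neg hγ0 hγ1
  rw [Real.rpow_def_of_pos hγ0, Real.rpow_def_of_pos hγ0]
  have := exp_lip (a := Real.log γ * x) (b := Real.log γ * y)
    (mul_nonpos_of_nonpos_of_nonneg hlog.le hx)
    (mul_nonpos_of_nonpos_of_nonneg hlog.le hy)
  calc |Real.exp (Real.log γ * x) - Real.exp (Real.log γ * y)|
      ≤ |Real.log γ * x - Real.log γ * y| := this
    _ = (-Real.log γ) * |x - y| := by
        rw [← mul_sub, abs_mul, abs_of_neg hlog]

open Finset in
/-- Quantitative core of Theorem 5 (corner-point abstraction): shifting each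
delay by at most `2ε` changes the discounted return of a bounded-horizon
trajectory by at most `2·ε·B·(n+1)·(1 + (-ln γ)·(1+M)·n)`. -/
theorem corner_abstraction_return_close (γ : ℝ) (hγ0 : 0 < γ) (hγ1 : γ < 1)
    (n : ℕ) (M B ε : ℝ) (hM : 0 ≤ M) (hB : 0 ≤ B) (hε : 0 ≤ ε)
    (Δθ Δu : ℕ → ℝ) (hΔθ : ∀ i ≤ n, |Δθ i| ≤ B) (hΔu : ∀ i ≤ n, |Δu i| ≤ B)
    (d d' : ℕ → ℝ)
    (hd : ∀ i ≤ n, d i ∈ Set.Icc (0:ℝ) M) (hd' : ∀ i ≤ n, d' i ∈ Set.Icc (0:ℝ) M)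
    (hdd' : ∀ i ≤ n, |d i - d' i| ≤ 2 * ε) :
    |(∑ i ∈ range (n + 1), γ ^ (∑ j ∈ range i, (d j + 1)) *
        (Δθ i + ((1 - γ ^ d i) / (-Real.log γ)) * Δu i))
      - (∑ i ∈ range (n + 1), γ ^ (∑ j ∈ range i, (d' j + 1)) *
        (Δθ i + ((1 - γ ^ d' i) / (-Real.log γ)) * Δu i))|
    ≤ 2 * ε * B * (n + 1) * (1 + (-Real.log γ) * (1 + M) * n) := by
  have hlog : Real.log γ < 0 := Real.log_neg hγ0 hγ1
  set L : ℝ := -Real.log γ with hLdef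
  have hL : 0 < L := by simp [hLdef]; linarith
  set C : ℝ := 2 * ε * B * (1 + L * (1 + M) * n) with hCdef
  have key : ∀ i ∈ range (n + 1),
      |γ ^ (∑ j ∈ range i, (d j + 1)) *
          (Δθ i + ((1 - γ ^ d i) / L) * Δu i)
        - γ ^ (∑ j ∈ range i, (d' j + 1)) *
          (Δθ i + ((1 - γ ^ d' i) / L) * Δu i)| ≤ C := by
    intro i hi
    have hin : i ≤ n := Nat.lt_succ_iff.mp (mem_range.mp hi)
    have hdj : ∀ j < i, j ≤ n := fun j hj => le_trans (Nat.le_of_lt hj) hin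
    set t : ℝ := ∑ j ∈ range i, (d j + 1) with htdef
    set t' : ℝ := ∑ j ∈ range i, (d' j + 1) with ht'def
    have ht0 : 0 ≤ t := Finset.sum_nonneg fun j hj => by
      have := (hd j (hdj j (mem_range.mp hj))).1; linarith
    have ht'0 : 0 ≤ t' := Finset.sum_nonneg fun j hj => by
      have := (hd' j (hdj j (mem_range.mp hj))).1; linarith
    have htt' : |t - t'| ≤ 2 * ε * n := by
      have h1 : t - t' = ∑ j ∈ range i, (d j - d' j) := by
        rw [htdef, ht'def, ← Finset.sum_sub_distrib]; congr 1; ext j; ring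
      rw [h1]
      calc |∑ j ∈ range i, (d j - d' j)|
          ≤ ∑ j ∈ range i, |d j - d' j| := Finset.abs_sum_le_sum_abs _ _
        _ ≤ ∑ _j ∈ range i, (2 * ε) := Finset.sum_le_sum fun j hj =>
            hdd' j (hdj j (mem_range.mp hj))
        _ = i * (2 * ε) := by rw [Finset.sum_const, Finset.card_range]; ring
        _ ≤ n * (2 * ε) := by
            have : (i : ℝ) ≤ n := Nat.cast_le.mpr hin
            nlinarith
        _ = 2 * ε * n := by ring
    have hrpow_le_one : ∀ {x : ℝ}, 0 ≤ x → γ ^ x ≤ 1 := fun hx =>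
      Real.rpow_le_one hγ0.le hγ1.le hx
    have hrpow_pos : ∀ x : ℝ, 0 < γ ^ x := fun x => Real.rpow_pos_of_pos hγ0 x
    -- bound on |γ^t - γ^t'|
    have h1 : |γ ^ t - γ ^ t'| ≤ L * (2 * ε * n) := by
      calc |γ ^ t - γ ^ t'| ≤ L * |t - t'| := rpow_lip hγ0 hγ1 ht0 ht'0
        _ ≤ L * (2 * ε * n) := by nlinarith
    -- bound on |A i|
    have hdi := hd i hin
    have hdi' := hd' i hin
    have hr : ∀ {x : ℝ}, 0 ≤ x → x ≤ M → (1 - γ ^ x) / L ∈ Set.Icc (0:ℝ) M := by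
      intro x hx hxM
      constructor
      · exact div_nonneg (by linarith [hrpow_le_one hx]) hL.le
      · rw [div_le_iff₀ hL]
        have := rpow_lip hγ0 hγ1 (le_refl (0:ℝ)) hx
        rw [Real.rpow_zero] at this
        have h2 : |1 - γ ^ x| = 1 - γ ^ x := abs_of_nonneg (by linarith [hrpow_le_one hx])
        have h3 : |(0:ℝ) - x| = x := by rw [zero_sub, abs_neg, abs_of_nonneg hx]
        rw [h2, h3] at this
        nlinarith
    have hrA := hr hdi.1 hdi.2
    have hA : |Δθ i + ((1 - γ ^ d i) / L) * Δu i| ≤ B * (1 + M) := by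
      calc |Δθ i + ((1 - γ ^ d i) / L) * Δu i|
          ≤ |Δθ i| + |(1 - γ ^ d i) / L| * |Δu i| := by
            rw [← abs_mul]; exact abs_add_le _ _
        _ ≤ B + M * B := by
            have hθ := hΔθ i hin
            have hu := hΔu i hin
            have h4 : |(1 - γ ^ d i) / L| ≤ M := by
              rw [abs_of_nonneg hrA.1]; exact hrA.2
            have h5 : (0:ℝ) ≤ |Δu i| := abs_nonneg _
            nlinarith
        _ = B * (1 + M) := by ring
    -- bound on |A i - A' i|
    have hAA' : |(Δθ i + ((1 - γ ^ d i) / L) * Δu i)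
        - (Δθ i + ((1 - γ ^ d' i) / L) * Δu i)| ≤ 2 * ε * B := by
      have heq : (Δθ i + ((1 - γ ^ d i) / L) * Δu i)
          - (Δθ i + ((1 - γ ^ d' i) / L) * Δu i)
          = ((γ ^ d' i - γ ^ d i) / L) * Δu i := by ring
      rw [heq, abs_mul, abs_div, abs_of_pos hL]
      have h6 : |γ ^ d' i - γ ^ d i| ≤ L * (2 * ε) := by
        calc |γ ^ d' i - γ ^ d i| ≤ L * |d' i - d i| := rpow_lip hγ0 hγ1 hdi'.1 hdi.1
          _ ≤ L * (2 * ε) := by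
              have := hdd' i hin
              rw [abs_sub_comm] at this
              nlinarith
      have hu := hΔu i hin
      have h7 : |γ ^ d' i - γ ^ d i| / L ≤ 2 * ε := by
        rw [div_le_iff₀ hL]; nlinarith
      calc |γ ^ d' i - γ ^ d i| / L * |Δu i| ≤ (2 * ε) * B :=
            mul_le_mul h7 hu (abs_nonneg _) (by linarith)
        _ = 2 * ε * B := by ring
    -- combine
    have heq2 : γ ^ t * (Δθ i + ((1 - γ ^ d i) / L) * Δu i)
        - γ ^ t' * (Δθ i + ((1 - γ ^ d' i) / L) * Δu i)
        = (γ ^ t - γ ^ t') * (Δθ i + ((1 - γ ^ d i) / L) * Δu i)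
          + γ ^ t' * ((Δθ i + ((1 - γ ^ d i) / L) * Δu i)
            - (Δθ i + ((1 - γ ^ d' i) / L) * Δu i)) := by ring
    rw [heq2]
    calc |(γ ^ t - γ ^ t') * (Δθ i + ((1 - γ ^ d i) / L) * Δu i)
          + γ ^ t' * ((Δθ i + ((1 - γ ^ d i) / L) * Δu i)
            - (Δθ i + ((1 - γ ^ d' i) / L) * Δu i))|
        ≤ |γ ^ t - γ ^ t'| * |Δθ i + ((1 - γ ^ d i) / L) * Δu i|
          + γ ^ t' * |(Δθ i + ((1 - γ ^ d i) / L) * Δu i)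
            - (Δθ i + ((1 - γ ^ d' i) / L) * Δu i)| := by
          refine le_trans (abs_add_le _ _) ?_
          rw [abs_mul, abs_mul, abs_of_pos (hrpow_pos t')]
      _ ≤ (L * (2 * ε * n)) * (B * (1 + M)) + 1 * (2 * ε * B) := by
          have hp1 : γ ^ t' ≤ 1 := hrpow_le_one ht'0
          have := hrpow_pos t'
          gcongr
      _ = C := by rw [hCdef]; ring
  calc |(∑ i ∈ range (n + 1), γ ^ (∑ j ∈ range i, (d j + 1)) *
        (Δθ i + ((1 - γ ^ d i) / L) * Δu i))
      - (∑ i ∈ range (n + 1), γ ^ (∑ j ∈ range i, (d' j + 1)) *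
        (Δθ i + ((1 - γ ^ d' i) / L) * Δu i))|
      = |∑ i ∈ range (n + 1), (γ ^ (∑ j ∈ range i, (d j + 1)) *
          (Δθ i + ((1 - γ ^ d i) / L) * Δu i)
        - γ ^ (∑ j ∈ range i, (d' j + 1)) *
          (Δθ i + ((1 - γ ^ d' i) / L) * Δu i))| := by
        rw [Finset.sum_sub_distrib]
    _ ≤ ∑ i ∈ range (n + 1), |γ ^ (∑ j ∈ range i, (d j + 1)) *
          (Δθ i + ((1 - γ ^ d i) / L) * Δu i)
        - γ ^ (∑ j ∈ range i, (d' j + 1)) *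
          (Δθ i + ((1 - γ ^ d' i) / L) * Δu i)| := Finset.abs_sum_le_sum_abs _ _
    _ ≤ ∑ _i ∈ range (n + 1), C := Finset.sum_le_sum key
    _ = (n + 1) * C := by rw [Finset.sum_const, Finset.card_range]; push_cast; ring
    _ = 2 * ε * B * (n + 1) * (1 + L * (1 + M) * n) := by rw [hCdef]; ring
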